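/- For every k ≥ n, R*(k+n) ≤ R*(k): given an optimal walk with k visits, inserting immediately after a binding subwalk a shortcut of that binding subwalk with exactly n visits (retaining the last visit to each target) yields a feasible walk with k+n visits whose revisit time equals R*(k). -/

import Mathlib

/-- A closed walk with `k` visits on `n` targets, modeled as a `k`-periodic
sequence of targets in which consecutive visits are distinct and every
target is visited at least once in each period. -/
structure CWalk (n k : ℕ) where
  seq : ℕ → Fin n
  periodic : ∀ i, seq (i + k) = seq i
  step : ∀ i, seq i ≠ seq (i + 1)
  covers : ∀ d : Fin n, ∃ i < k, seq i = d

namespace CWalk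

/-- Travel time from the `i`-th to the `j`-th visit. -/
noncomputable def tt {n k : ℕ} (c : Fin n → Fin n → ℝ) (W : CWalk n k) (i j : ℕ) : ℝ :=
  ∑ t ∈ Finset.Ico i j, c (W.seq t) (W.seq (t + 1))

/-- Duration of one period of the walk. -/
noncomputable def duration {n k : ℕ} (c : Fin n → Fin n → ℝ) (W : CWalk n k) : ℝ :=
  W.tt c 0 k

/-- Revisit time of target `d`: the maximum time between consecutive visits to `d`. -/
noncomputable def RT {n k : ℕ} (c : Fin n → Fin n → ℝ) (W : CWalk n k) (d : Fin n) : ℝ :=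
  sSup {T : ℝ | ∃ i j : ℕ, i < j ∧ W.seq i = d ∧ W.seq j = d ∧
    (∀ t, i < t → t < j → W.seq t ≠ d) ∧ T = W.tt c i j}

/-- Revisit time of the walk: maximum revisit time over all targets. -/
noncomputable def R {n k : ℕ} (c : Fin n → Fin n → ℝ) (W : CWalk n k) : ℝ :=
  sSup {T : ℝ | ∃ d : Fin n, T = W.RT c d}

end CWalk


namespace CWalk

/-! ### Generic lemmas -/

section Generic

variable {n k : ℕ} (c : Fin n → Fin n → ℝ) (W : CWalk n k)

/-- `(i,j)` is a maximal revisit interval ("gap") for target `e`. -/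
def IsGap (e : Fin n) (i j : ℕ) : Prop :=
  i < j ∧ W.seq i = e ∧ W.seq j = e ∧ (∀ t, i < t → t < j → W.seq t ≠ e)

def gapSet (e : Fin n) : Set ℝ :=
  {T : ℝ | ∃ i j : ℕ, i < j ∧ W.seq i = e ∧ W.seq j = e ∧
    (∀ t, i < t → t < j → W.seq t ≠ e) ∧ T = W.tt c i j}

lemma RT_eq (e : Fin n) : W.RT c e = sSup (W.gapSet c e) := rfl

lemma mem_gapSet {e i j} (h : W.IsGap e i j) : W.tt c i j ∈ W.gapSet c e :=
  ⟨i, j, h.1, h.2.1, h.2.2.1, h.2.2.2, rfl⟩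

lemma seq_add_mul (i m : ℕ) : W.seq (i + m * k) = W.seq i := by
  induction m with
  | zero => simp
  | succ m ih => rw [Nat.succ_mul, ← Nat.add_assoc, W.periodic, ih]

lemma seq_mod (hk : 0 < k) (i : ℕ) : W.seq i = W.seq (i % k) := by
  conv_lhs => rw [← Nat.mod_add_div i k]
  rw [Nat.mul_comm, seq_add_mul]

lemma tt_eq_sum_range (i j : ℕ) :
    W.tt c i j = ∑ t ∈ Finset.range (j - i), c (W.seq (i + t)) (W.seq (i + t + 1)) := by
  rw [tt, Finset.sum_Ico_eq_sum_range]

lemma tt_shift (i j : ℕ) : W.tt c (i + k) (j + k) = W.tt c i j := by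
  rw [tt_eq_sum_range, tt_eq_sum_range]
  have : j + k - (i + k) = j - i := by omega
  rw [this]
  refine Finset.sum_congr rfl fun t _ => ?_
  have h1 : i + k + t = i + t + k := by omega
  have h2 : i + t + k + 1 = i + t + 1 + k := by omega
  rw [h1, h2, W.periodic, W.periodic]

lemma tt_add {i j l : ℕ} (h1 : i ≤ j) (h2 : j ≤ l) :
    W.tt c i l = W.tt c i j + W.tt c j l := by
  rw [tt, tt, tt, Finset.sum_Ico_consecutive _ h1 h2]

lemma tt_single (i : ℕ) : W.tt c i (i + 1) = c (W.seq i) (W.seq (i + 1)) := by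
  simp [tt]

lemma tt_pos (hc : ∀ u v : Fin n, u ≠ v → 0 < c u v) {i j : ℕ} (hij : i < j) :
    0 < W.tt c i j := by
  rw [tt]
  apply Finset.sum_pos
  · intro t _
    exact hc _ _ (W.step t)
  · exact ⟨i, Finset.mem_Ico.2 ⟨le_refl i, hij⟩⟩

lemma tt_nonneg (hc : ∀ u v : Fin n, u ≠ v → 0 < c u v) (i j : ℕ) :
    0 ≤ W.tt c i j := by
  rcases lt_or_ge i j with h | h
  · exact le_of_lt (W.tt_pos c hc h)
  · rw [tt, Finset.Ico_eq_empty (by omega), Finset.sum_empty]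

lemma tt_le_tt (hc : ∀ u v : Fin n, u ≠ v → 0 < c u v) {i' i j j' : ℕ}
    (h1 : i' ≤ i) (h2 : i ≤ j) (h3 : j ≤ j') : W.tt c i j ≤ W.tt c i' j' := by
  rw [W.tt_add c h1 (h2.trans h3), W.tt_add c h2 h3]
  have := W.tt_nonneg c hc i' i
  have := W.tt_nonneg c hc j j'
  linarith

lemma exists_visit_in_window (hk : 0 < k) (m : ℕ) (e : Fin n) :
    ∃ t, m ≤ t ∧ t < m + k ∧ W.seq t = e := by
  obtain ⟨t0, ht0k, ht0⟩ := W.covers e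
  set a := m + k - 1 - t0 with ha
  set q := a / k with hq
  have h1 : q * k + a % k = a := by rw [hq, Nat.mul_comm]; exact Nat.div_add_mod a k
  have h2 : a % k < k := Nat.mod_lt _ hk
  refine ⟨t0 + q * k, by omega, by omega, ?_⟩
  rw [W.seq_add_mul, ht0]

lemma gap_exists_right (hk : 0 < k) (i : ℕ) :
    ∃ j, W.IsGap (W.seq i) i j ∧ j ≤ i + k := by
  have hex : ∃ t, i < t ∧ W.seq t = W.seq i := ⟨i + k, by omega, W.periodic i⟩
  classical
  set j := Nat.find hex with hj
  obtain ⟨hij, hsj⟩ := Nat.find_spec hex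
  refine ⟨j, ⟨hij, rfl, hsj, fun t ht1 ht2 hts => ?_⟩, ?_⟩
  · exact absurd ⟨ht1, hts⟩ (Nat.find_min hex ht2)
  · by_contra h
    exact absurd ⟨by omega, W.periodic i⟩ (Nat.find_min hex (by omega))

lemma IsGap.le_window (hk : 0 < k) {e : Fin n} {i j : ℕ} (h : W.IsGap e i j) : j ≤ i + k := by
  obtain ⟨j0, hg0, hj0⟩ := W.gap_exists_right hk i
  rw [h.2.1] at hg0
  by_contra hcon
  exact h.2.2.2 j0 hg0.1 (by omega) hg0.2.2.1

lemma tt_period_const (i : ℕ) : W.tt c i (i + k) = W.tt c 0 k := by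
  induction i with
  | zero => simp
  | succ i ih =>
    have h1 : W.tt c i (i + 1 + k) = W.tt c i (i + 1) + W.tt c (i + 1) (i + 1 + k) := by
      apply W.tt_add c <;> omega
    have h2 : W.tt c i (i + 1 + k) = W.tt c i (i + k) + W.tt c (i + k) (i + 1 + k) := by
      apply W.tt_add c <;> omega
    have h3 : W.tt c (i + k) (i + 1 + k) = W.tt c i (i + 1) := by
      rw [show i + 1 + k = (i + k) + 1 by omega, tt_single, tt_single, W.periodic]
      congr 1
      rw [show i + k + 1 = (i + 1) + k by omega, W.periodic]
    rw [← ih]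
    linarith

lemma gap_tt_le_duration (hc : ∀ u v : Fin n, u ≠ v → 0 < c u v) (hk : 0 < k)
    {e : Fin n} {i j : ℕ} (h : W.IsGap e i j) : W.tt c i j ≤ W.tt c 0 k := by
  rw [← W.tt_period_const c i]
  exact W.tt_le_tt c hc (le_refl i) h.1.le (h.le_window W hk)

lemma gapSet_nonempty (hk : 0 < k) (e : Fin n) : (W.gapSet c e).Nonempty := by
  obtain ⟨i, _, hi⟩ := W.covers e
  obtain ⟨j, hg, _⟩ := W.gap_exists_right hk i
  rw [hi] at hg
  exact ⟨_, W.mem_gapSet c hg⟩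

lemma gap_reduce {e : Fin n} {i j : ℕ} (h : W.IsGap e i j) :
    ∃ i' j', i' < k ∧ W.IsGap e i' j' ∧ W.tt c i' j' = W.tt c i j := by
  induction i using Nat.strong_induction_on generalizing j with
  | _ i ih =>
    rcases lt_or_ge i k with hik | hik
    · exact ⟨i, j, hik, h, rfl⟩
    · have hk : 0 < k := by
        rcases Nat.eq_zero_or_pos k with h0 | h0
        · exfalso; obtain ⟨t, ht, _⟩ := W.covers e; omega
        · exact h0
      have hij := h.1
      have hjk : k ≤ j := le_trans hik h.1.le
      have hg : W.IsGap e (i - k) (j - k) := by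
        refine ⟨by omega, ?_, ?_, fun t ht1 ht2 => ?_⟩
        · have := W.periodic (i - k); rw [show i - k + k = i by omega] at this
          rw [← this]; exact h.2.1
        · have := W.periodic (j - k); rw [show j - k + k = j by omega] at this
          rw [← this]; exact h.2.2.1
        · have := W.periodic t
          rw [← this]
          exact h.2.2.2 (t + k) (by omega) (by omega)
      obtain ⟨i', j', hi', hg', htt⟩ := ih (i - k) (by omega) hg
      refine ⟨i', j', hi', hg', ?_⟩
      rw [htt]
      have := W.tt_shift c (i - k) (j - k)
      rw [show i - k + k = i by omega, show j - k + k = j by omega] at this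
      rw [this]

lemma gapSet_finite (hk : 0 < k) (e : Fin n) : (W.gapSet c e).Finite := by
  have hsub : W.gapSet c e ⊆ (fun p : ℕ × ℕ => W.tt c p.1 p.2) ''
      {p : ℕ × ℕ | p.1 < k ∧ p.2 ≤ 2 * k} := by
    rintro x ⟨i, j, h1, h2, h3, h4, rfl⟩
    obtain ⟨i', j', hi', hg', htt⟩ := W.gap_reduce c (e := e) ⟨h1, h2, h3, h4⟩
    exact ⟨(i', j'), ⟨hi', by have := hg'.le_window W hk; omega⟩, htt⟩
  exact Set.Finite.subset (Set.Finite.image _ (((Set.finite_Iio k).prod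
    (Set.finite_Iic (2 * k))))) hsub

lemma RT_mem_gapSet (hk : 0 < k) (e : Fin n) : W.RT c e ∈ W.gapSet c e :=
  Set.Nonempty.csSup_mem (W.gapSet_nonempty c hk e) (W.gapSet_finite c hk e)

lemma le_RT (hk : 0 < k) {e : Fin n} {x : ℝ}
    (hx : x ∈ W.gapSet c e) : x ≤ W.RT c e :=
  le_csSup ((W.gapSet_finite c hk e).bddAbove) hx

lemma RT_le_R (e : Fin n) : W.RT c e ≤ W.R c := by
  apply le_csSup
  · have : {T : ℝ | ∃ d : Fin n, T = W.RT c d} = Set.range (W.RT c) := by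
      ext x; simp [Set.range, eq_comm]
    rw [this]
    exact (Set.finite_range _).bddAbove
  · exact ⟨e, rfl⟩

lemma gap_tt_le_R (hk : 0 < k) {e : Fin n} {i j : ℕ} (h : W.IsGap e i j) :
    W.tt c i j ≤ W.R c :=
  le_trans (W.le_RT c hk (W.mem_gapSet c h)) (W.RT_le_R c e)

lemma R_attained (hk : 0 < k) (hn : 0 < n) :
    ∃ e i j, W.IsGap e i j ∧ W.tt c i j = W.R c := by
  have hne : {T : ℝ | ∃ d : Fin n, T = W.RT c d}.Nonempty := ⟨_, ⟨0, hn⟩, rfl⟩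
  have hfin : {T : ℝ | ∃ d : Fin n, T = W.RT c d}.Finite := by
    have : {T : ℝ | ∃ d : Fin n, T = W.RT c d} = Set.range (W.RT c) := by
      ext x; simp [Set.range, eq_comm]
    rw [this]; exact Set.finite_range _
  obtain ⟨e, he⟩ := Set.Nonempty.csSup_mem hne hfin
  obtain ⟨i, j, h1, h2, h3, h4, h5⟩ := W.RT_mem_gapSet c hk e
  exact ⟨e, i, j, ⟨h1, h2, h3, h4⟩, by rw [← h5, ← he]; rfl⟩

lemma R_pos (hc : ∀ u v : Fin n, u ≠ v → 0 < c u v) (hk : 0 < k) (hn : 0 < n) :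
    0 < W.R c := by
  obtain ⟨e, i, j, hg, htt⟩ := W.R_attained c hk hn
  rw [← htt]
  exact W.tt_pos c hc hg.1

lemma R_le_of_gaps (hc : ∀ u v : Fin n, u ≠ v → 0 < c u v) {B : ℝ} (hB : 0 ≤ B)
    (h : ∀ e i j, W.IsGap e i j → W.tt c i j ≤ B) : W.R c ≤ B := by
  apply Real.sSup_le _ hB
  rintro x ⟨d, rfl⟩
  apply Real.sSup_le _ hB
  rintro x ⟨i, j, h1, h2, h3, h4, rfl⟩
  exact h d i j ⟨h1, h2, h3, h4⟩

lemma exists_binding_gap (hc : ∀ u v : Fin n, u ≠ v → 0 < c u v) (hk : 0 < k) (hn : 0 < n) :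
    ∃ P Q, k ≤ P ∧ W.IsGap (W.seq P) P Q ∧ W.tt c P Q = W.R c ∧
      (∀ e : Fin n, ∃ t, P ≤ t ∧ t ≤ Q ∧ W.seq t = e) := by
  classical
  obtain ⟨d, p, q, hg, htt⟩ := W.R_attained c hk hn
  refine ⟨p + k, q + k, by omega, ?_, ?_, ?_⟩
  · have hpq := hg.1
    refine ⟨by omega, rfl, ?_, fun t ht1 ht2 hte => ?_⟩
    · rw [W.periodic, W.periodic, hg.2.2.1, hg.2.1]
    · have htk : W.seq t = W.seq (t - k) := by
        conv_lhs => rw [show t = t - k + k by omega]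
        exact W.periodic _
      rw [htk] at hte
      rw [W.periodic, hg.2.1] at hte
      exact hg.2.2.2 (t - k) (by omega) (by omega) hte
  · rw [W.tt_shift, htt]
  · intro e
    by_contra hcon
    push_neg at hcon
    set P := p + k with hP
    set Q := q + k with hQ
    have hseqP : W.seq P = d := by rw [hP, W.periodic, hg.2.1]
    have hseqQ : W.seq Q = d := by rw [hQ, W.periodic, hg.2.2.1]
    have hpq := hg.1
    have hed : e ≠ d := by
      intro h
      exact hcon P (le_refl P) (by omega) (by rw [hseqP, h])
    -- a visit to e at or before P
    obtain ⟨w, hw1, hw2, hw3⟩ := W.exists_visit_in_window hk (P - k) e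
    have hwP : w ≤ P := by omega
    set i := Nat.findGreatest (fun t => W.seq t = e) P with hi
    have hie : W.seq i = e := Nat.findGreatest_spec (P := fun t => W.seq t = e) hwP hw3
    have hiP : i ≤ P := Nat.findGreatest_le P
    have hiPlt : i < P := by
      rcases Nat.lt_or_ge i P with h | h
      · exact h
      · exfalso; have : i = P := by omega
        rw [this, hseqP] at hie; exact hed hie.symm
    have hex : ∃ t, i < t ∧ W.seq t = e := ⟨i + k, by omega, by rw [W.periodic, hie]⟩
    set j := Nat.find hex with hj
    obtain ⟨hij, hje⟩ := Nat.find_spec hex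
    have hQj : Q < j := by
      rcases Nat.lt_or_ge Q j with h | h
      · exact h
      · exfalso
        rcases Nat.lt_or_ge P j with h2 | h2
        · exact hcon j (by omega) h (hje)
        · exact Nat.findGreatest_is_greatest hij h2 hje
    have hgij : W.IsGap e i j := by
      refine ⟨hij, hie, hje, fun t ht1 ht2 hte => ?_⟩
      exact absurd ⟨ht1, hte⟩ (Nat.find_min hex ht2)
    have hle : W.tt c i j ≤ W.R c := W.gap_tt_le_R c hk hgij
    have hsplit : W.tt c i j = W.tt c i P + W.tt c P Q + W.tt c Q j := by
      rw [W.tt_add c (i := i) (j := P) (l := j) (by omega) (by omega),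
        W.tt_add c (i := P) (j := Q) (l := j) (by omega) (by omega)]
      ring
    have h1 : 0 < W.tt c i P := W.tt_pos c hc hiPlt
    have h2 : 0 < W.tt c Q j := W.tt_pos c hc hQj
    have h3 : W.tt c P Q = W.R c := by rw [hP, hQ, W.tt_shift, htt]
    linarith

lemma tt_self (i : ℕ) : W.tt c i i = 0 := by simp [tt]

lemma c_le_tt (htri : ∀ u v w : Fin n, c u w ≤ c u v + c v w) {i j : ℕ} (h : i < j) :
    c (W.seq i) (W.seq j) ≤ W.tt c i j := by
  induction j, h using Nat.le_induction with
  | base => rw [tt_single]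
  | succ j hij ih =>
    have h1 : W.tt c i (j + 1) = W.tt c i j + W.tt c j (j + 1) := W.tt_add c (by omega) (by omega)
    have h2 := htri (W.seq i) (W.seq j) (W.seq (j + 1))
    have h3 := W.tt_single c j
    linarith

end Generic

section Construction

variable {n k : ℕ} (c : Fin n → Fin n → ℝ)

set_option maxHeartbeats 2000000 in
lemma exists_extension (hc : ∀ u v : Fin n, u ≠ v → 0 < c u v)
    (htri : ∀ u v w : Fin n, c u w ≤ c u v + c v w)
    (hn : 2 ≤ n) (hnk : n ≤ k) (W : CWalk n k) :
    ∃ W' : CWalk n (k + n), W'.R c ≤ W.R c := by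
  classical
  have hk : 0 < k := by omega
  have hn0 : 0 < n := by omega
  obtain ⟨P, Q, hkP, hgap, httR, hvisit⟩ := W.exists_binding_gap c hc hk hn0
  have hPQ : P < Q := hgap.1
  have hQPk : Q ≤ P + k := hgap.le_window W hk
  have hkQ : k ≤ Q := by omega
  set s := Q + 1 - k with hs
  have hsk : s + k = Q + 1 := by omega
  -- last visit before or at Q
  set T : Fin n → ℕ := fun e => Nat.findGreatest (fun t => W.seq t = e) Q with hT
  have hTseq : ∀ e, W.seq (T e) = e := by
    intro e
    obtain ⟨w, hw1, hw2, hw3⟩ := hvisit e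
    exact Nat.findGreatest_spec (P := fun t => W.seq t = e) hw2 hw3
  have hTle : ∀ e, T e ≤ Q := fun e => Nat.findGreatest_le Q
  have hTQ : T (W.seq P) = Q :=
    le_antisymm (hTle _) (Nat.le_findGreatest (le_refl Q) hgap.2.2.1)
  have hTgt : ∀ e, P < T e := by
    intro e
    by_cases he : e = W.seq P
    · rw [he, hTQ]; exact hPQ
    · obtain ⟨w, hw1, hw2, hw3⟩ := hvisit e
      have h1 : P ≤ T e := le_trans hw1 (Nat.le_findGreatest hw2 hw3)
      rcases h1.lt_or_eq with h | h
      · exact h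
      · exfalso; apply he; rw [← hTseq e, ← h]
  have hTmax : ∀ e w, T e < w → w ≤ Q → W.seq w ≠ e :=
    fun e w h1 h2 => Nat.findGreatest_is_greatest h1 h2
  have hTinj : Function.Injective T := fun a b hab => by
    rw [← hTseq a, ← hTseq b, hab]
  -- sorted enumeration of the last-visit positions
  set F : Finset ℕ := Finset.image T Finset.univ with hF
  have hFcard : F.card = n := by
    rw [hF, Finset.card_image_of_injective _ hTinj, Finset.card_univ, Fintype.card_fin]
  set t : Fin n → ℕ := fun a => F.orderEmbOfFin hFcard a with ht
  have htmono : StrictMono t := (F.orderEmbOfFin hFcard).strictMono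
  have htmem : ∀ a, ∃ e, T e = t a := by
    intro a
    have h1 : t a ∈ F := Finset.orderEmbOfFin_mem F hFcard a
    rw [hF] at h1
    simpa using h1
  set d : Fin n → Fin n := fun a => W.seq (t a) with hd
  have hdT : ∀ a, T (d a) = t a := by
    intro a
    obtain ⟨e, he⟩ := htmem a
    have : d a = e := by rw [hd]; simp only; rw [← he, hTseq]
    rw [this, he]
  have hdinj : Function.Injective d := by
    intro a b hab
    have h1 := congrArg T hab
    rw [hdT, hdT] at h1
    exact htmono.injective h1
  have hdsurj : Function.Surjective d := Finite.surjective_of_injective hdinj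
  have htgt : ∀ a, P < t a := fun a => by rw [← hdT a]; exact hTgt _
  have htle : ∀ a, t a ≤ Q := fun a => by rw [← hdT a]; exact hTle _
  have hlast : t ⟨n - 1, by omega⟩ = Q := by
    have hQF : Q ∈ F := by
      rw [hF]
      refine Finset.mem_image.2 ⟨W.seq P, Finset.mem_univ _, hTQ⟩
    have h2 : ∃ a, t a = Q := by
      have hr := Finset.range_orderEmbOfFin F hFcard
      have hQF' : Q ∈ (F : Set ℕ) := hQF
      rw [← hr] at hQF'
      obtain ⟨a, ha⟩ := hQF'
      exact ⟨a, ha⟩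
    obtain ⟨a, ha⟩ := h2
    have h3 : t a ≤ t ⟨n - 1, by omega⟩ := htmono.monotone (by
      rw [Fin.le_def]; simp; omega)
    have h4 := htle ⟨n - 1, by omega⟩
    omega
  have hdlast : d ⟨n - 1, by omega⟩ = W.seq P := by
    rw [hd]; simp only; rw [hlast]; exact hgap.2.2.1
  -- the new walk
  set K := k + n with hKdef
  have hK : 0 < K := by omega
  set base : ℕ → Fin n := fun r =>
    if r < k then W.seq (r + s) else d ⟨(r - k) % n, Nat.mod_lt _ hn0⟩ with hbase
  set sq : ℕ → Fin n := fun i => base (i % K) with hsq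
  have hsqU : ∀ r, r < k → sq r = W.seq (r + s) := by
    intro r hr
    rw [hsq]; simp only
    rw [Nat.mod_eq_of_lt (by omega), hbase]; simp only [if_pos hr]
  have hsqB : ∀ a : Fin n, sq (k + a.val) = d a := by
    intro a
    have ha := a.isLt
    rw [hsq]; simp only
    rw [Nat.mod_eq_of_lt (by omega), hbase]
    simp only [if_neg (by omega : ¬ k + a.val < k)]
    congr 1
    apply Fin.ext
    simp only
    rw [show k + a.val - k = a.val by omega, Nat.mod_eq_of_lt ha]
  have hsqB' : ∀ r, k ≤ r → r < K → sq r = d ⟨(r - k) % n, Nat.mod_lt _ hn0⟩ := by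
    intro r h1 h2
    rw [hsq]; simp only
    rw [Nat.mod_eq_of_lt h2, hbase]
    simp only [if_neg (by omega : ¬ r < k)]
  have hper : ∀ i, sq (i + K) = sq i := by
    intro i; rw [hsq]; simp only [Nat.add_mod_right]
  have hd0last : d ⟨0, hn0⟩ ≠ W.seq P := by
    rw [← hdlast]
    intro h
    have := hdinj h
    have := congrArg Fin.val this
    simp at this
    omega
  have hstep : ∀ i, sq i ≠ sq (i + 1) := by
    intro i
    have hmod : i % K < K := Nat.mod_lt _ hK
    have h1 : sq i = sq (i % K) := by
      rw [hsq]; simp only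
      rw [Nat.mod_mod_of_dvd _ dvd_rfl]
    have h2 : sq (i + 1) = sq (i % K + 1) := by
      rw [hsq]; simp only
      congr 1
      conv_lhs => rw [Nat.add_mod]
      rw [Nat.mod_eq_of_lt (show (1 : ℕ) < K by omega)]
    rw [h1, h2]
    set r := i % K with hr
    rcases Nat.lt_or_ge (r + 1) k with hc1 | hc1
    · rw [hsqU r (by omega), hsqU (r + 1) hc1,
        show r + 1 + s = r + s + 1 by omega]
      exact W.step (r + s)
    rcases Nat.eq_or_lt_of_le hc1 with hc2 | hc2
    · -- r + 1 = k
      have v1 : sq r = W.seq Q := by rw [hsqU r (by omega), show r + s = Q by omega]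
      have v2 : sq (r + 1) = d ⟨0, hn0⟩ := by
        rw [hsqB' (r + 1) (by omega) (by omega)]
        congr 1
        apply Fin.ext
        show (r + 1 - k) % n = 0
        rw [show r + 1 - k = 0 by omega]
        exact Nat.zero_mod n
      rw [v1, v2, hgap.2.2.1]
      exact fun h => hd0last h.symm
    rcases Nat.lt_or_ge (r + 1) K with hc3 | hc3
    · -- both in block
      have v1 : sq r = d ⟨(r - k) % n, Nat.mod_lt _ hn0⟩ := hsqB' r (by omega) (by omega)
      have v2 : sq (r + 1) = d ⟨(r + 1 - k) % n, Nat.mod_lt _ hn0⟩ :=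
        hsqB' (r + 1) (by omega) (by omega)
      rw [v1, v2]
      intro h
      have h2 := congrArg Fin.val (hdinj h)
      simp only at h2
      rw [Nat.mod_eq_of_lt (by omega), Nat.mod_eq_of_lt (by omega)] at h2
      omega
    · -- r = K - 1, wraps to 0
      have hrK : r + 1 = K := by omega
      have v1 : sq r = W.seq P := by
        rw [hsqB' r (by omega) (by omega)]
        rw [show (⟨(r - k) % n, Nat.mod_lt _ hn0⟩ : Fin n) = ⟨n - 1, by omega⟩ from
          Fin.ext (by show (r - k) % n = n - 1; rw [Nat.mod_eq_of_lt (by omega)]; omega)]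
        exact hdlast
      have v2 : sq (r + 1) = W.seq s := by
        have e2 : sq (r + 1) = sq 0 := by
          rw [hrK, show K = 0 + K by omega, hper]
        rw [e2, hsqU 0 hk, Nat.zero_add]
      rw [v1, v2]
      have e3 : W.seq (Q + 1) = W.seq s := by
        rw [show Q + 1 = s + k by omega, W.periodic]
      rw [← e3, ← hgap.2.2.1]
      exact W.step Q
  have hcov : ∀ e : Fin n, ∃ i < K, sq i = e := by
    intro e
    obtain ⟨a, ha⟩ := hdsurj e
    exact ⟨k + a.val, by have := a.isLt; omega, by rw [hsqB, ha]⟩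
  set W' : CWalk n K := ⟨sq, hper, hstep, hcov⟩ with hW'
  have hseq' : W'.seq = sq := rfl
  refine ⟨W', ?_⟩
  -- travel times in the U part
  have hU : ∀ u v : ℕ, u ≤ v → v < k → W'.tt c u v = W.tt c (u + s) (v + s) := by
    intro u v huv hvk
    rw [tt_eq_sum_range, tt_eq_sum_range, show v + s - (u + s) = v - u by omega]
    refine Finset.sum_congr rfl fun x hx => ?_
    rw [Finset.mem_range] at hx
    have e1 : W'.seq (u + x) = W.seq (u + x + s) := by
      rw [hseq']; exact hsqU _ (by omega)
    have e2 : W'.seq (u + x + 1) = W.seq (u + x + 1 + s) := by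
      rw [hseq']; exact hsqU _ (by omega)
    rw [e1, e2, show u + s + x = u + x + s by omega, show u + x + s + 1 = u + x + 1 + s by omega]
  -- bound on the prefix of the inserted block
  have hblock : ∀ b : ℕ, ∀ hb : b < n, W'.tt c (k - 1) (k + b) ≤ W.tt c P (t ⟨b, hb⟩) := by
    intro b
    induction b with
    | zero =>
      intro hb
      have e0 : W'.tt c (k - 1) (k - 1 + 1) = c (W'.seq (k - 1)) (W'.seq (k - 1 + 1)) :=
        W'.tt_single c (k - 1)
      rw [show k - 1 + 1 = k + 0 by omega] at e0
      rw [e0]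
      have e1 : W'.seq (k - 1) = W.seq Q := by
        rw [hseq', hsqU (k - 1) (by omega), show k - 1 + s = Q by omega]
      have e2 : W'.seq (k + 0) = d ⟨0, hn0⟩ := by
        rw [hseq']
        exact hsqB ⟨0, hn0⟩
      have e3 : d ⟨0, hn0⟩ = W.seq (t ⟨0, hn0⟩) := by rw [hd]
      rw [e1, e2, e3, hgap.2.2.1]
      exact W.c_le_tt c htri (htgt _)
    | succ b ih =>
      intro hb
      have hbn : b < n := by omega
      have e1 : W'.tt c (k - 1) (k + (b + 1)) =
          W'.tt c (k - 1) (k + b) + W'.tt c (k + b) (k + (b + 1)) :=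
        W'.tt_add c (by omega) (by omega)
      have e2 : W'.tt c (k + b) (k + (b + 1)) = c (d ⟨b, hbn⟩) (d ⟨b + 1, hb⟩) := by
        have e0 := W'.tt_single c (k + b)
        rw [show k + b + 1 = k + (b + 1) by omega] at e0
        rw [e0]
        congr 1
        · rw [hseq']; exact hsqB ⟨b, hbn⟩
        · rw [hseq']; exact hsqB ⟨b + 1, hb⟩
      have e3 : c (d ⟨b, hbn⟩) (d ⟨b + 1, hb⟩) ≤ W.tt c (t ⟨b, hbn⟩) (t ⟨b + 1, hb⟩) := by
        rw [hd]
        exact W.c_le_tt c htri (htmono (Fin.mk_lt_mk.2 (by omega)))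
      have e4 : W.tt c P (t ⟨b + 1, hb⟩) =
          W.tt c P (t ⟨b, hbn⟩) + W.tt c (t ⟨b, hbn⟩) (t ⟨b + 1, hb⟩) :=
        W.tt_add c (htgt _).le (htmono.monotone (Fin.mk_le_mk.2 (by omega)))
      have e5 := ih hbn
      linarith
  -- bound on suffixes of the inserted block
  have hsuffix : ∀ m a : ℕ, ∀ h : a + m ≤ n - 1,
      W'.tt c (k + a) (k + a + m) ≤ W.tt c (t ⟨a, by omega⟩) (t ⟨a + m, by omega⟩) := by
    intro m
    induction m with
    | zero =>
      intro a h
      have h0 : W'.tt c (k + a) (k + a + 0) = 0 := W'.tt_self c (k + a)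
      have h1 : 0 ≤ W.tt c (t ⟨a, by omega⟩) (t ⟨a + 0, by omega⟩) := W.tt_nonneg c hc _ _
      exact h0.le.trans h1
    | succ m ih =>
      intro a h
      have hm : a + m ≤ n - 1 := by omega
      have e1 : W'.tt c (k + a) (k + a + m + 1) =
          W'.tt c (k + a) (k + a + m) + W'.tt c (k + a + m) (k + a + m + 1) :=
        W'.tt_add c (by omega) (by omega)
      have hamn : a + m < n := by omega
      have hamn1 : a + m + 1 < n := by omega
      have e2 : W'.tt c (k + a + m) (k + a + m + 1) =
          c (d ⟨a + m, hamn⟩) (d ⟨a + m + 1, hamn1⟩) := by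
        have e0 := W'.tt_single c (k + a + m)
        rw [e0]
        congr 1
        · have e7 : W'.seq (k + (a + m)) = d ⟨a + m, hamn⟩ := by
            rw [hseq']; exact hsqB ⟨a + m, hamn⟩
          rw [show k + a + m = k + (a + m) by omega]
          exact e7
        · have e7 : W'.seq (k + (a + m + 1)) = d ⟨a + m + 1, hamn1⟩ := by
            rw [hseq']; exact hsqB ⟨a + m + 1, hamn1⟩
          rw [show k + a + m + 1 = k + (a + m + 1) by omega]
          exact e7
      have e3 : c (d ⟨a + m, hamn⟩) (d ⟨a + m + 1, hamn1⟩) ≤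
          W.tt c (t ⟨a + m, hamn⟩) (t ⟨a + m + 1, hamn1⟩) := by
        rw [hd]
        exact W.c_le_tt c htri (htmono (Fin.mk_lt_mk.2 (by omega)))
      have e4 : W.tt c (t ⟨a, by omega⟩) (t ⟨a + m + 1, by omega⟩) =
          W.tt c (t ⟨a, by omega⟩) (t ⟨a + m, hamn⟩) +
          W.tt c (t ⟨a + m, hamn⟩) (t ⟨a + m + 1, hamn1⟩) :=
        W.tt_add c (htmono.monotone (Fin.mk_le_mk.2 (by omega)))
          (htmono.monotone (Fin.mk_le_mk.2 (by omega)))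
      have e5 := ih a hm
      have hfinal : W'.tt c (k + a) (k + a + m + 1) ≤
          W.tt c (t ⟨a, by omega⟩) (t ⟨a + m + 1, hamn1⟩) := by linarith
      exact hfinal
  -- every gap of the new walk has travel time at most R(W)
  have hmaster : ∀ e i j, W'.IsGap e i j → W'.tt c i j ≤ W.R c := by
    intro e i0 j0 hg0
    obtain ⟨i, j, hiK, hg2, htteq⟩ := W'.gap_reduce c hg0
    rw [← htteq]
    have hij : i < j := hg2.1
    have hie : W'.seq i = e := hg2.2.1
    have hje : W'.seq j = e := hg2.2.2.1
    have hmid : ∀ x, i < x → x < j → W'.seq x ≠ e := hg2.2.2.2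
    rcases Nat.lt_or_ge i k with hik | hik
    · -- case A : i in the W part
      have heis : W.seq (i + s) = e := by
        rw [hseq', hsqU i hik] at hie; exact hie
      obtain ⟨a, ha⟩ := hdsurj e
      have haK : k + a.val < K := by have := a.isLt; omega
      have hjlea : j ≤ k + a.val := by
        by_contra hcon
        push_neg at hcon
        refine hmid (k + a.val) (by omega) hcon ?_
        rw [hseq', hsqB, ha]
      rcases Nat.lt_or_ge j k with hjk | hjk
      · -- case A1 : j also in the W part
        have hjes : W.seq (j + s) = e := by
          rw [hseq', hsqU j hjk] at hje; exact hje
        have hWgap : W.IsGap e (i + s) (j + s) := by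
          refine ⟨by omega, heis, hjes, fun w hw1 hw2 hwe => ?_⟩
          have hx : w - s < k := by omega
          refine hmid (w - s) (by omega) (by omega) ?_
          rw [hseq', hsqU (w - s) hx, show w - s + s = w by omega]
          exact hwe
        rw [hU i j (by omega) hjk]
        exact W.gap_tt_le_R c hk hWgap
      · -- case A2 : j is the block visit
        have hja : j = k + a.val := by
          have hjK : j < K := by omega
          have h1 : W'.seq j = d ⟨(j - k) % n, Nat.mod_lt _ hn0⟩ := by
            rw [hseq']; exact hsqB' j hjk hjK
          have h2 : d ⟨(j - k) % n, Nat.mod_lt _ hn0⟩ = d a := by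
            rw [← h1, hje, ha]
          have h3 := congrArg Fin.val (hdinj h2)
          simp only at h3
          rw [Nat.mod_eq_of_lt (by omega)] at h3
          omega
        have hTei : T e = i + s := by
          have h1 : i + s ≤ T e := Nat.le_findGreatest (by omega) heis
          by_contra hne
          have h2 : i + s < T e := by omega
          have h3 : T e - s < k := by have := hTle e; omega
          refine hmid (T e - s) (by omega) (by omega) ?_
          rw [hseq', hsqU _ h3, show T e - s + s = T e by omega]
          exact hTseq e
        have hs1 : W'.tt c i j = W'.tt c i (k - 1) + W'.tt c (k - 1) j :=
          W'.tt_add c (by omega) (by omega)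
        have hs2 : W'.tt c i (k - 1) = W.tt c (T e) Q := by
          rw [hU i (k - 1) (by omega) (by omega), show k - 1 + s = Q by omega, ← hTei]
        have hs3 : W'.tt c (k - 1) j ≤ W.tt c P (t a) := by
          rw [hja]
          exact hblock a.val a.isLt
        have hs4 : t a = T e := by rw [← hdT a, ha]
        have hs5 : W.tt c P Q = W.tt c P (T e) + W.tt c (T e) Q :=
          W.tt_add c (hTgt e).le (hTle e)
        rw [← httR, hs1, hs2]
        rw [hs4] at hs3
        linarith
    · -- case B : i is a block visit
      obtain ⟨a, ha0⟩ : ∃ a : Fin n, a.val = i - k := ⟨⟨i - k, by omega⟩, rfl⟩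
      have hia : i = k + a.val := by omega
      have hae : d a = e := by
        rw [← hie, hseq', hia]
        exact (hsqB a).symm
      have hex : ∃ v, v < k ∧ W.seq (v + s) = e := by
        obtain ⟨w, hw1, hw2, hw3⟩ := W.exists_visit_in_window hk s e
        exact ⟨w - s, by omega, by rw [show w - s + s = w by omega]; exact hw3⟩
      obtain ⟨u, ⟨huk, hue⟩, humin'⟩ :
          ∃ u, (u < k ∧ W.seq (u + s) = e) ∧ ∀ v < u, ¬(v < k ∧ W.seq (v + s) = e) :=
        ⟨Nat.find hex, Nat.find_spec hex, fun v hv => Nat.find_min hex hv⟩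
      have humin : ∀ v, v < u → v < k → W.seq (v + s) ≠ e := by
        intro v hv hvk hve
        exact humin' v hv ⟨hvk, hve⟩
      have hKu : W'.seq (K + u) = e := by
        have hp : W'.seq (u + K) = W'.seq u := W'.periodic u
        rw [show K + u = u + K by omega, hp, hseq', hsqU u huk]
        exact hue
      have hjKu : j = K + u := by
        have hle : j ≤ K + u := by
          by_contra hcon
          push_neg at hcon
          exact absurd hKu (hmid (K + u) (by omega) hcon)
        rcases eq_or_lt_of_le hle with hh | hh
        · exact hh
        exfalso
        rcases Nat.lt_or_ge j K with hjK | hjK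
        · have h1 : W'.seq j = d ⟨(j - k) % n, Nat.mod_lt _ hn0⟩ := by
            rw [hseq']; exact hsqB' j (by omega) hjK
          have h2 : d ⟨(j - k) % n, Nat.mod_lt _ hn0⟩ = d a := by
            rw [← h1, hje, ← hae]
          have h3 := congrArg Fin.val (hdinj h2)
          simp only at h3
          rw [Nat.mod_eq_of_lt (by omega)] at h3
          omega
        · have hx : j - K < u := by omega
          have h1 : W'.seq j = W.seq (j - K + s) := by
            have hp : W'.seq (j - K + K) = W'.seq (j - K) := W'.periodic _
            conv_lhs => rw [show j = j - K + K by omega]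
            rw [hp, hseq', hsqU _ (by omega)]
          exact humin (j - K) hx (by omega) (by rw [← h1]; exact hje)
      -- travel time pieces
      have hs1 : W'.tt c i j = W'.tt c i (K - 1) + W'.tt c (K - 1) K + W'.tt c K (K + u) := by
        rw [hjKu, W'.tt_add c (i := i) (j := K - 1) (l := K + u) (by omega) (by omega),
          W'.tt_add c (i := K - 1) (j := K) (l := K + u) (by omega) (by omega)]
        ring
      have hs2 : W'.tt c i (K - 1) ≤ W.tt c (t a) Q := by
        have hisLt := a.isLt
        have h6 := hsuffix (n - 1 - a.val) a.val (by omega)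
        have hvq : (⟨a.val + (n - 1 - a.val), by omega⟩ : Fin n) = (⟨n - 1, by omega⟩ : Fin n) :=
          Fin.ext (by simp only; omega)
        have hvq2 := congrArg t hvq
        have hvq3 : t ⟨a.val + (n - 1 - a.val), by omega⟩ = Q := hvq2.trans hlast
        refine le_trans (le_of_eq ?_) (le_trans h6 (le_of_eq ?_))
        · rw [hia, show k + a.val + (n - 1 - a.val) = K - 1 by omega]
        · exact congrArg (W.tt c (t a)) hvq3
      have hs3 : W'.tt c (K - 1) K = W.tt c Q (Q + 1) := by
        have h7 := W'.tt_single c (K - 1)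
        rw [show K - 1 + 1 = K by omega] at h7
        have e7 : W'.seq (K - 1) = W.seq Q := by
          rw [hseq', hsqB' (K - 1) (by omega) (by omega)]
          have h8 : (⟨(K - 1 - k) % n, Nat.mod_lt _ hn0⟩ : Fin n) = (⟨n - 1, by omega⟩ : Fin n) :=
            Fin.ext (by show (K - 1 - k) % n = n - 1; rw [Nat.mod_eq_of_lt (by omega)]; omega)
          rw [h8, hdlast, ← hgap.2.2.1]
        have e8 : W'.seq K = W.seq (Q + 1) := by
          rw [hseq']
          have h0 : sq K = sq 0 := by
            have h0' := hper 0
            rw [Nat.zero_add] at h0'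
            exact h0'
          rw [h0, hsqU 0 hk, Nat.zero_add]
          conv_rhs => rw [show Q + 1 = s + k by omega, W.periodic]
        rw [h7, e7, e8, W.tt_single c Q]
      have hs4 : W'.tt c K (K + u) = W.tt c (Q + 1) (Q + 1 + u) := by
        have h9 : W'.tt c K (K + u) = W'.tt c 0 u := by
          have h9' := W'.tt_shift c 0 u
          rw [Nat.zero_add] at h9'
          rw [show K + u = u + K by omega, h9']
        have h10 : W.tt c (s + k) (u + s + k) = W.tt c s (u + s) := W.tt_shift c s (u + s)
        rw [show s + k = Q + 1 by omega, show u + s + k = Q + 1 + u by omega] at h10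
        rw [h9, hU 0 u (by omega) huk, Nat.zero_add, ← h10]
      have hWgap2 : W.IsGap e (T e) (Q + 1 + u) := by
        refine ⟨by have := hTle e; omega, hTseq e, ?_, fun w hw1 hw2 hwe => ?_⟩
        · rw [show Q + 1 + u = u + s + k by omega, W.periodic]
          exact hue
        · rcases Nat.lt_or_ge Q w with hQw | hQw
          · have hx : w - (s + k) < u := by omega
            refine humin (w - (s + k)) hx (by omega) ?_
            have hp : W.seq (w - k + k) = W.seq (w - k) := W.periodic _
            rw [show w - k + k = w by omega] at hp
            rw [show w - (s + k) + s = w - k by omega, ← hp]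
            exact hwe
          · exact hTmax e w hw1 hQw hwe
      have hfin : W.tt c (T e) (Q + 1 + u) ≤ W.R c := W.gap_tt_le_R c hk hWgap2
      have hsplit2 : W.tt c (T e) (Q + 1 + u) =
          W.tt c (T e) Q + W.tt c Q (Q + 1) + W.tt c (Q + 1) (Q + 1 + u) := by
        rw [W.tt_add c (i := T e) (j := Q) (l := Q + 1 + u) (hTle e) (by omega),
          W.tt_add c (i := Q) (j := Q + 1) (l := Q + 1 + u) (by omega) (by omega)]
        ring
      have hta : t a = T e := by rw [← hdT a, hae]
      rw [hta] at hs2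
      rw [hs1, hs3, hs4]
      linarith
  exact W'.R_le_of_gaps c hc (W.R_pos c hc hk hn0).le hmaster

/-- On two targets every closed walk has an even number of visits. -/
lemma even_of_two {m : ℕ} (W : CWalk 2 m) : Even m := by
  have h2 : ∀ i, W.seq (i + 2) = W.seq i := by
    intro i
    have a1 := W.step i
    have a2 := W.step (i + 1)
    have b0 := (W.seq i).isLt
    have b1 := (W.seq (i + 1)).isLt
    have b2 := (W.seq (i + 1 + 1)).isLt
    have c1 : (W.seq i).val ≠ (W.seq (i + 1)).val := fun h => a1 (Fin.ext h)
    have c2 : (W.seq (i + 1)).val ≠ (W.seq (i + 1 + 1)).val := fun h => a2 (Fin.ext h)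
    apply Fin.ext
    show (W.seq (i + 1 + 1)).val = (W.seq i).val
    omega
  have h2m : ∀ m' i, W.seq (i + 2 * m') = W.seq i := by
    intro m'
    induction m' with
    | zero => intro i; simp
    | succ m' ih =>
      intro i
      rw [show i + 2 * (m' + 1) = i + 2 * m' + 2 by omega, h2, ih]
  by_contra hodd
  rw [Nat.not_even_iff_odd] at hodd
  obtain ⟨l, hl⟩ := hodd
  have e1 : W.seq m = W.seq 0 := by
    have h := W.periodic 0
    rw [Nat.zero_add] at h
    exact h
  have e2 : W.seq m = W.seq 1 := by
    have h := h2m l 1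
    rw [← h]
    congr 1
    omega
  have := W.step 0
  rw [← e1, e2] at this
  exact this rfl

/-- Existence of a closed walk with `k` visits. -/
lemma exists_cwalk {n k : ℕ} (hn : 2 ≤ n) (hnk : n ≤ k) (hcase : 3 ≤ n ∨ Even k) :
    Nonempty (CWalk n k) := by
  have hk : 0 < k := by omega
  have hn0 : 0 < n := by omega
  set f : ℕ → Fin n := fun j =>
    if h : j < n then ⟨j, h⟩
    else if (k - 1 - j) % 2 = 0 then ⟨1, by omega⟩ else ⟨0, by omega⟩ with hf
  refine ⟨⟨fun i => f (i % k), ?_, ?_, ?_⟩⟩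
  · intro i; simp only [Nat.add_mod_right]
  · intro i
    have hm : i % k < k := Nat.mod_lt _ hk
    have h2 : (i + 1) % k = (i % k + 1) % k := by
      conv_lhs => rw [Nat.add_mod]
      rw [Nat.mod_eq_of_lt (show 1 < k by omega)]
    rw [h2]
    obtain ⟨r, hrdef⟩ : ∃ r, r = i % k := ⟨_, rfl⟩
    rw [← hrdef]
    rw [← hrdef] at hm
    rcases Nat.lt_or_ge (r + 1) k with hr | hr
    · rw [Nat.mod_eq_of_lt hr]
      rcases Nat.lt_or_ge (r + 1) n with h1 | h1
      · rw [hf]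
        simp only [dif_pos (show r < n by omega), dif_pos h1]
        intro hh
        rw [Fin.mk.injEq] at hh
        omega
      · rcases Nat.lt_or_ge r n with h3 | h3
        · -- r = n - 1 enters the alternating part
          rw [hf]
          simp only [dif_pos h3, dif_neg (Nat.not_lt.2 h1)]
          by_cases hp : (k - 1 - (r + 1)) % 2 = 0
          · rw [if_pos hp]
            intro hh
            rw [Fin.mk.injEq] at hh
            rcases hcase with h4 | h4
            · omega
            · obtain ⟨l, hl⟩ := h4
              omega
          · rw [if_neg hp]
            intro hh
            rw [Fin.mk.injEq] at hh
            omega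
        · -- both in the alternating part
          rw [hf]
          simp only [dif_neg (Nat.not_lt.2 (show n ≤ r by omega)),
            dif_neg (Nat.not_lt.2 h1)]
          by_cases hp : (k - 1 - r) % 2 = 0
          · have hp2 : (k - 1 - (r + 1)) % 2 ≠ 0 := by omega
            rw [if_pos hp, if_neg hp2]
            intro hh
            rw [Fin.mk.injEq] at hh
            omega
          · have hp2 : (k - 1 - (r + 1)) % 2 = 0 := by omega
            rw [if_neg hp, if_pos hp2]
            intro hh
            rw [Fin.mk.injEq] at hh
            omega
    · -- wrap-around
      have hrk : r + 1 = k := by omega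
      have h0 : (r + 1) % k = 0 := by rw [hrk, Nat.mod_self]
      rw [h0]
      rcases Nat.lt_or_ge r n with h3 | h3
      · rw [hf]
        simp only [dif_pos h3, dif_pos hn0]
        intro hh
        rw [Fin.mk.injEq] at hh
        omega
      · rw [hf]
        simp only [dif_neg (Nat.not_lt.2 h3), dif_pos hn0]
        have he : k - 1 - r = 0 := by omega
        rw [he]
        rw [if_pos (show (0 : ℕ) % 2 = 0 from rfl)]
        intro hh
        rw [Fin.mk.injEq] at hh
        omega
  · intro e
    refine ⟨e.val, by have := e.isLt; omega, ?_⟩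
    rw [Nat.mod_eq_of_lt (by have := e.isLt; omega), hf]
    simp only [dif_pos e.isLt]

end Construction

end CWalk

/-- Optimal revisit time over all closed walks with `k` visits. -/
noncomputable def Rstar (n : ℕ) (c : Fin n → Fin n → ℝ) (k : ℕ) : ℝ :=
  sInf {T : ℝ | ∃ W : CWalk n k, T = W.R c}

/-- Optimal TSP tour length: minimal duration of a closed walk with `n` visits
(each target is then visited exactly once). -/
noncomputable def TSPstar (n : ℕ) (c : Fin n → Fin n → ℝ) : ℝ :=
  sInf {T : ℝ | ∃ W : CWalk n n, T = W.duration c}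

/-- for every `k ≥ n`, `R*(k + n) ≤ R*(k)`. -/
theorem Rstar_add_n_le
    (n : ℕ) (hn : 2 ≤ n)
    (c : Fin n → Fin n → ℝ)
    (hc : ∀ u v : Fin n, u ≠ v → 0 < c u v)
    (htri : ∀ u v w : Fin n, c u w ≤ c u v + c v w) :
    ∀ k, n ≤ k → Rstar n c (k + n) ≤ Rstar n c k := by
  intro k hnk
  rcases isEmpty_or_nonempty (CWalk n k) with hempty | hne
  · have hn2 : n = 2 ∧ ¬ Even k := by
      by_contra hcon
      have h3 : 3 ≤ n ∨ Even k := by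
        by_cases h : 3 ≤ n
        · exact Or.inl h
        · right
          by_contra hek
          exact hcon ⟨by omega, hek⟩
      obtain ⟨W⟩ := CWalk.exists_cwalk hn hnk h3
      exact hempty.false W
    obtain ⟨hn2', hodd⟩ := hn2
    subst hn2'
    have hempty2 : IsEmpty (CWalk 2 (k + 2)) := by
      constructor
      intro V
      obtain ⟨l, hl⟩ := CWalk.even_of_two V
      exact hodd ⟨l - 1, by omega⟩
    have h1 : {T : ℝ | ∃ W : CWalk 2 (k + 2), T = W.R c} = ∅ := by
      ext x
      simp only [Set.mem_setOf_eq, Set.mem_empty_iff_false, iff_false]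
      rintro ⟨W, _⟩
      exact hempty2.false W
    have h2 : {T : ℝ | ∃ W : CWalk 2 k, T = W.R c} = ∅ := by
      ext x
      simp only [Set.mem_setOf_eq, Set.mem_empty_iff_false, iff_false]
      rintro ⟨W, _⟩
      exact hempty.false W
    unfold Rstar
    rw [h1, h2]
  · obtain ⟨W0⟩ := hne
    have hBdd : BddBelow {T : ℝ | ∃ W : CWalk n (k + n), T = W.R c} := by
      refine ⟨0, fun x hx => ?_⟩
      obtain ⟨V, rfl⟩ := hx
      exact (V.R_pos c hc (by omega) (by omega)).le
    unfold Rstar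
    refine le_csInf ⟨W0.R c, W0, rfl⟩ ?_
    rintro T ⟨W, rfl⟩
    obtain ⟨W', hW'⟩ := CWalk.exists_extension c hc htri hn hnk W
    exact le_trans (csInf_le hBdd ⟨W', rfl⟩) hW'
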